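/- Let H be a complex Hilbert space, k a natural number with 0 < k < dim H, and let φ : B(H) → B(H) be a positive unital linear map which maps the set of rank-k orthogonal projections in B(H) onto itself. Then every finite-rank operator on H is in the image under φ of the finite-rank operators, and consequently φ restricted to the compact operators C(H) has norm-dense range in C(H). -/

import Mathlib

set_option linter.unusedSectionVars false
set_option maxHeartbeats 1000000

open scoped InnerProductSpace ComplexConjugate
open ContinuousLinearMap Module Submodule

variable {H : Type*} [NormedAddCommGroup H] [InnerProductSpace ℂ H] [CompleteSpace H]

/-- `P` is an orthogonal projection of rank `k` on `H`. -/
def IsRankProj (k : ℕ) (P : H →L[ℂ] H) : Prop :=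
  IsSelfAdjoint P ∧ P * P = P ∧ Module.rank ℂ (LinearMap.range (P : H →ₗ[ℂ] H)) = k

/-- `a` is a finite-rank operator: its range is finite-dimensional. -/
def IsFiniteRankOp (a : H →L[ℂ] H) : Prop :=
  FiniteDimensional ℂ (LinearMap.range (a : H →ₗ[ℂ] H))

noncomputable def rk1 (u v : H) : H →L[ℂ] H := (innerSL ℂ v).smulRight u

@[simp] lemma rk1_apply (u v x : H) : rk1 u v x = (inner ℂ v x : ℂ) • u := rfl

lemma rk1_mul (a b c d : H) : rk1 a b * rk1 c d = (inner ℂ b c : ℂ) • rk1 a d := by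
  ext x
  simp [rk1_apply, inner_smul_right, smul_smul, mul_comm]

lemma rk1_adjoint (u v : H) : ContinuousLinearMap.adjoint (rk1 u v) = rk1 v u := by
  symm
  rw [ContinuousLinearMap.eq_adjoint_iff]
  intro x y
  simp [rk1_apply, inner_smul_left, inner_smul_right, inner_conj_symm, mul_comm]

lemma rk1_isSelfAdjoint (u : H) : IsSelfAdjoint (rk1 u u) :=
  ContinuousLinearMap.isSelfAdjoint_iff'.2 (rk1_adjoint u u)

lemma isRankProj_sum {n : ℕ} {g : Fin n → H} (hg : Orthonormal ℂ g) (s : Finset (Fin n)) :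
    IsRankProj s.card (∑ j ∈ s, rk1 (g j) (g j)) := by
  classical
  have hite := orthonormal_iff_ite.mp hg
  refine ⟨?_, ?_, ?_⟩
  · rw [IsSelfAdjoint, star_sum]
    refine Finset.sum_congr rfl fun j _ => ?_
    exact rk1_isSelfAdjoint (g j)
  · rw [Finset.sum_mul_sum]
    refine Finset.sum_congr rfl fun j hj => ?_
    simp only [rk1_mul, hite, ite_smul, one_smul, zero_smul]
    rw [Finset.sum_ite_eq, if_pos hj]
  · have hrange : LinearMap.range ((∑ j ∈ s, rk1 (g j) (g j) : H →L[ℂ] H) : H →ₗ[ℂ] H)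
        = span ℂ (g '' s) := by
      apply le_antisymm
      · rintro y ⟨x, rfl⟩
        simp only [ContinuousLinearMap.coe_sum, LinearMap.sum_apply, ContinuousLinearMap.coe_coe,
          rk1_apply]
        exact sum_mem fun j hj => smul_mem _ _ (subset_span ⟨j, hj, rfl⟩)
      · rw [span_le]
        rintro y ⟨j, hj, rfl⟩
        refine ⟨g j, ?_⟩
        simp only [ContinuousLinearMap.coe_sum, LinearMap.sum_apply, ContinuousLinearMap.coe_coe,
          rk1_apply, hite]
        simp only [ite_smul, one_smul, zero_smul]
        rw [Finset.sum_ite_eq', if_pos (Finset.mem_coe.mp hj)]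
    rw [hrange]
    have himg : g '' s = Set.range (g ∘ (Subtype.val : {x // x ∈ s} → Fin n)) := by
      rw [Set.range_comp]
      congr 1
      ext y
      simp
    rw [himg, rank_span ((hg.linearIndependent).comp _ Subtype.val_injective)]
    rw [← himg, ← Finset.coe_image]
    simp only [Finset.coe_sort_coe]
    rw [Cardinal.mk_coe_finset, Finset.card_image_of_injective s hg.linearIndependent.injective]

lemma rk1_cons_mem_span {k : ℕ} (hk : 0 < k) {g : Fin (k+1) → H} (hg : Orthonormal ℂ g) :
    rk1 (g 0) (g 0) ∈ span ℂ {P : H →L[ℂ] H | IsRankProj k P} := by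
  classical
  set S := {P : H →L[ℂ] H | IsRankProj k P} with hS
  set R : Fin (k+1) → (H →L[ℂ] H) := fun j => rk1 (g j) (g j) with hR
  set T : H →L[ℂ] H := ∑ j, R j with hT
  have hPmem : ∀ i : Fin (k+1), T - R i ∈ span ℂ S := by
    intro i
    have h1 := isRankProj_sum hg (Finset.univ.erase i)
    rw [Finset.card_erase_of_mem (Finset.mem_univ i), Finset.card_univ, Fintype.card_fin,
      Nat.add_sub_cancel] at h1
    have h2 : (∑ j ∈ Finset.univ.erase i, rk1 (g j) (g j)) = T - R i := by
      rw [eq_sub_iff_add_eq, hT]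
      exact Finset.sum_erase_add _ _ (Finset.mem_univ i)
    rw [h2] at h1
    exact subset_span h1
  have hsum : (k : ℂ) • R 0 =
      (∑ i ∈ Finset.univ.erase (0 : Fin (k+1)), (T - R i)) - ((k : ℂ) - 1) • (T - R 0) := by
    have e1 : (∑ i ∈ Finset.univ.erase (0 : Fin (k+1)), (T - R i))
        = (k : ℂ) • T - (T - R 0) := by
      rw [Finset.sum_sub_distrib, Finset.sum_const, Finset.card_erase_of_mem (Finset.mem_univ _),
        Finset.card_univ, Fintype.card_fin, Nat.add_sub_cancel]
      have e2 : (∑ i ∈ Finset.univ.erase (0 : Fin (k+1)), R i) = T - R 0 := by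
        rw [eq_sub_iff_add_eq, hT]
        exact Finset.sum_erase_add _ _ (Finset.mem_univ _)
      rw [e2, Nat.cast_smul_eq_nsmul]
    rw [e1]
    module
  have hmem : (k : ℂ) • R 0 ∈ span ℂ S := by
    rw [hsum]
    exact sub_mem (sum_mem fun i _ => hPmem i) (smul_mem _ _ (hPmem 0))
  have hk' : (k : ℂ) ≠ 0 := Nat.cast_ne_zero.mpr hk.ne'
  have : R 0 = (k : ℂ)⁻¹ • ((k : ℂ) • R 0) := by rw [smul_smul, inv_mul_cancel₀ hk', one_smul]
  show R 0 ∈ span ℂ S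
  rw [this]
  exact smul_mem _ _ hmem

lemma exists_orthonormal_cons {k : ℕ} (hkdim : (k : Cardinal) < Module.rank ℂ H)
    {w : H} (hw : ‖w‖ = 1) :
    ∃ g : Fin (k+1) → H, Orthonormal ℂ g ∧ g 0 = w := by
  classical
  have hw0 : w ≠ 0 := by
    intro h; rw [h, norm_zero] at hw; norm_num at hw
  have hle : ((k+1 : ℕ) : Cardinal) ≤ Module.rank ℂ H := by
    rw [Nat.cast_add, Nat.cast_one]
    exact (Cardinal.add_one_le_succ _).trans (Order.succ_le_of_lt hkdim)
  obtain ⟨s, hcard, hli⟩ := le_rank_iff_exists_linearIndependent_finset.mp hle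
  set V₀ : Submodule ℂ H := span ℂ (↑s : Set H) ⊔ span ℂ {w} with hV₀
  haveI : FiniteDimensional ℂ ↥(span ℂ (↑s : Set H)) := FiniteDimensional.span_finset ℂ s
  haveI : FiniteDimensional ℂ ↥V₀ := Submodule.finiteDimensional_sup _ _
  have hwV₀ : span ℂ {w} ≤ V₀ := le_sup_right
  have hfrV₀ : k + 1 ≤ finrank ℂ V₀ := by
    have h1 : finrank ℂ (span ℂ (↑s : Set H)) = k + 1 := by
      rw [finrank_span_finset_eq_card hli, hcard]
    rw [← h1]
    exact Submodule.finrank_mono le_sup_left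
  set W : Submodule ℂ H := (span ℂ {w})ᗮ ⊓ V₀ with hW
  have hfrW : k ≤ finrank ℂ W := by
    have h3 := Submodule.finrank_add_inf_finrank_orthogonal hwV₀
    rw [finrank_span_singleton hw0, ← hW] at h3
    omega
  let f := stdOrthonormalBasis ℂ ↥W
  have hWorth : W ≤ (span ℂ {w})ᗮ := inf_le_left
  refine ⟨Fin.cons w (fun i : Fin k => ((f (Fin.castLE hfrW i) : ↥W) : H)), ?_, Fin.cons_zero _ _⟩
  have h_unit : (inner ℂ w w : ℂ) = 1 := by
    rw [inner_self_eq_norm_sq_to_K, hw]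
    norm_num
  have h_orth : ∀ i : Fin k, (inner ℂ w ((f (Fin.castLE hfrW i) : ↥W) : H) : ℂ) = 0 := by
    intro i
    have hmem : ((f (Fin.castLE hfrW i) : ↥W) : H) ∈ (span ℂ {w})ᗮ := hWorth (f (Fin.castLE hfrW i)).2
    exact (Submodule.mem_orthogonal _ _).mp hmem w (mem_span_singleton_self w)
  have h_f : ∀ i j : Fin k, (inner ℂ ((f (Fin.castLE hfrW i) : ↥W) : H) ((f (Fin.castLE hfrW j) : ↥W) : H) : ℂ)
      = if i = j then 1 else 0 := by
    intro i j
    rw [← Submodule.coe_inner, orthonormal_iff_ite.mp f.orthonormal]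
    simp [Fin.castLE_inj]
  rw [orthonormal_iff_ite]
  intro i j
  refine Fin.cases ?_ ?_ i
  · refine Fin.cases ?_ ?_ j
    · simpa using h_unit
    · intro l
      simp only [Fin.cons_zero, Fin.cons_succ]
      rw [h_orth l, if_neg (Fin.succ_ne_zero l).symm]
  · intro l
    refine Fin.cases ?_ ?_ j
    · simp only [Fin.cons_zero, Fin.cons_succ]
      rw [if_neg (Fin.succ_ne_zero l)]
      exact inner_eq_zero_symm.mp (h_orth l)
    · intro m
      simp only [Fin.cons_succ]
      rw [h_f l m]
      simp [Fin.succ_inj]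

lemma rk1_self_mem_span {k : ℕ} (hk : 0 < k) (hkdim : (k : Cardinal) < Module.rank ℂ H)
    (w : H) : rk1 w w ∈ span ℂ {P : H →L[ℂ] H | IsRankProj k P} := by
  rcases eq_or_ne w 0 with rfl | hw0
  · have : rk1 (0:H) (0:H) = 0 := by ext x; simp
    rw [this]
    exact zero_mem _
  · set u : H := ((‖w‖ : ℂ))⁻¹ • w with hu
    have hnw : ‖w‖ ≠ 0 := norm_ne_zero_iff.mpr hw0
    have hnu : ‖u‖ = 1 := by
      rw [hu, norm_smul, norm_inv]
      have h5 : ‖((‖w‖ : ℂ))‖ = ‖w‖ := by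
        rw [Complex.norm_real, norm_norm]
      rw [h5]
      field_simp
    obtain ⟨g, hg, hg0⟩ := exists_orthonormal_cons hkdim hnu
    have hmem := rk1_cons_mem_span hk hg
    rw [hg0] at hmem
    have hscale : rk1 w w = ((‖w‖ : ℂ))^2 • rk1 u u := by
      have hc : ((‖w‖:ℂ)) ≠ 0 := Complex.ofReal_ne_zero.mpr hnw
      ext x
      simp only [rk1_apply, hu, inner_smul_left, inner_smul_right,
        ContinuousLinearMap.smul_apply, smul_smul, map_inv₀, Complex.conj_ofReal]
      match_scalars
      field_simp
    rw [hscale]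
    exact smul_mem _ _ hmem

lemma rk1_mem_span {k : ℕ} (hk : 0 < k) (hkdim : (k : Cardinal) < Module.rank ℂ H)
    (u v : H) : rk1 u v ∈ span ℂ {P : H →L[ℂ] H | IsRankProj k P} := by
  have key := rk1_self_mem_span (H := H) hk hkdim
  have hpol : rk1 u v = (4:ℂ)⁻¹ • (rk1 (u+v) (u+v) + Complex.I • rk1 (u + Complex.I•v) (u + Complex.I•v)
      - rk1 (u-v) (u-v) - Complex.I • rk1 (u - Complex.I•v) (u - Complex.I•v)) := by
    ext x
    simp only [rk1_apply, ContinuousLinearMap.smul_apply, ContinuousLinearMap.sub_apply,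
      ContinuousLinearMap.add_apply, inner_add_left, inner_add_right, inner_sub_left,
      inner_sub_right, inner_smul_left, inner_smul_right, Complex.conj_I, smul_smul]
    match_scalars <;> (ring_nf; try simp only [Complex.I_sq]; try ring_nf; try ring)
  rw [hpol]
  exact smul_mem _ _ (sub_mem (sub_mem (add_mem (key _) (smul_mem _ _ (key _))) (key _))
    (smul_mem _ _ (key _)))

lemma finiteRank_mem_span {k : ℕ} (hk : 0 < k) (hkdim : (k : Cardinal) < Module.rank ℂ H)
    {b : H →L[ℂ] H} (hb : IsFiniteRankOp b) :
    b ∈ span ℂ {P : H →L[ℂ] H | IsRankProj k P} := by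
  haveI : FiniteDimensional ℂ (LinearMap.range (b : H →ₗ[ℂ] H)) := hb
  set V := LinearMap.range (b : H →ₗ[ℂ] H) with hV
  let e := stdOrthonormalBasis ℂ ↥V
  have hb' : b = ∑ i, rk1 ((e i : H)) (ContinuousLinearMap.adjoint b (e i)) := by
    ext x
    have hmem : b x ∈ V := LinearMap.mem_range_self _ x
    have hrepr := e.sum_repr ⟨b x, hmem⟩
    have : b x = ((∑ i, e.repr ⟨b x, hmem⟩ i • e i : ↥V) : H) := by rw [hrepr]
    rw [this]
    push_cast
    rw [Finset.sum_apply]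
    refine Finset.sum_congr rfl fun i _ => ?_
    rw [rk1_apply, e.repr_apply_apply]
    congr 1
    rw [ContinuousLinearMap.adjoint_inner_left]
    rfl
  rw [hb']
  exact sum_mem fun i _ => rk1_mem_span hk hkdim _ _

lemma IsFiniteRankOp.add {a b : H →L[ℂ] H} (ha : IsFiniteRankOp a) (hb : IsFiniteRankOp b) :
    IsFiniteRankOp (a + b) := by
  haveI : FiniteDimensional ℂ (LinearMap.range (a : H →ₗ[ℂ] H)) := ha
  haveI : FiniteDimensional ℂ (LinearMap.range (b : H →ₗ[ℂ] H)) := hb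
  haveI : FiniteDimensional ℂ
      ↥(LinearMap.range (a : H →ₗ[ℂ] H) ⊔ LinearMap.range (b : H →ₗ[ℂ] H)) :=
    Submodule.finiteDimensional_sup _ _
  refine Submodule.finiteDimensional_of_le (S₂ := LinearMap.range (a : H →ₗ[ℂ] H)
    ⊔ LinearMap.range (b : H →ₗ[ℂ] H)) ?_
  rintro y ⟨x, rfl⟩
  exact Submodule.add_mem_sup (LinearMap.mem_range_self _ x) (LinearMap.mem_range_self _ x)

lemma IsFiniteRankOp.smul {a : H →L[ℂ] H} (c : ℂ) (ha : IsFiniteRankOp a) :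
    IsFiniteRankOp (c • a) := by
  haveI : FiniteDimensional ℂ (LinearMap.range (a : H →ₗ[ℂ] H)) := ha
  refine Submodule.finiteDimensional_of_le (S₂ := LinearMap.range (a : H →ₗ[ℂ] H)) ?_
  rintro y ⟨x, rfl⟩
  exact ⟨c • x, by simp⟩

lemma isFiniteRankOp_zero : IsFiniteRankOp (0 : H →L[ℂ] H) := by
  refine Submodule.finiteDimensional_of_le (S₂ := ⊥) ?_
  rintro y ⟨x, rfl⟩
  simp

/-- The submodule of finite-rank operators. -/
noncomputable def frSub : Submodule ℂ (H →L[ℂ] H) where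
  carrier := {a | IsFiniteRankOp a}
  add_mem' := fun ha hb => ha.add hb
  zero_mem' := isFiniteRankOp_zero
  smul_mem' := fun c _ ha => ha.smul c

lemma isFiniteRankOp_of_rankProj {k : ℕ} {P : H →L[ℂ] H} (hP : IsRankProj k P) :
    IsFiniteRankOp P :=
  Module.finite_of_rank_eq_nat hP.2.2

lemma isCompactOperator_of_finiteRank {a : H →L[ℂ] H} (ha : IsFiniteRankOp a) :
    IsCompactOperator a := by
  haveI : FiniteDimensional ℂ (LinearMap.range (a : H →ₗ[ℂ] H)) := ha
  set V := LinearMap.range (a : H →ₗ[ℂ] H) with hV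
  have hVclosed : IsClosed (V : Set H) := Submodule.closed_of_finiteDimensional V
  set C := closure (a '' Metric.closedBall 0 1) with hC
  have hCV : C ⊆ (V : Set H) := by
    rw [hC]
    refine closure_minimal ?_ hVclosed
    rintro y ⟨x, _, rfl⟩
    exact LinearMap.mem_range_self _ x
  have hCbdd : Bornology.IsBounded C := by
    have : a '' Metric.closedBall 0 1 ⊆ Metric.closedBall 0 ‖a‖ := by
      rintro y ⟨x, hx, rfl⟩
      rw [Metric.mem_closedBall, dist_zero_right]
      calc ‖a x‖ ≤ ‖a‖ * ‖x‖ := a.le_opNorm x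
      _ ≤ ‖a‖ * 1 := by
          refine mul_le_mul_of_nonneg_left ?_ (norm_nonneg a)
          rwa [Metric.mem_closedBall, dist_zero_right] at hx
      _ = ‖a‖ := mul_one _
    exact Bornology.IsBounded.subset (Metric.isBounded_closedBall) 
      ((closure_minimal this Metric.isClosed_closedBall).trans subset_rfl)
  -- transfer to the subtype
  haveI : ProperSpace ↥V := FiniteDimensional.proper ℂ ↥V
  have hD : IsCompact ((Subtype.val : ↥V → H) ⁻¹' C) := by
    refine Metric.isCompact_of_isClosed_isBounded (IsClosed.preimage continuous_subtype_val isClosed_closure) ?_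
    obtain ⟨r, hr⟩ := hCbdd.subset_closedBall 0
    rw [Metric.isBounded_iff_subset_closedBall (0 : ↥V)]
    refine ⟨r, fun y hy => ?_⟩
    have := hr hy
    rw [Metric.mem_closedBall, dist_zero_right] at this ⊢
    exact this
  have hCeq : C = (Subtype.val : ↥V → H) '' ((Subtype.val : ↥V → H) ⁻¹' C) := by
    rw [Set.image_preimage_eq_of_subset]
    rwa [Subtype.range_coe]
  have : IsCompactOperator (a : H →ₗ[ℂ] H) := by
    rw [isCompactOperator_iff_isCompact_closure_image_closedBall (a : H →ₗ[ℂ] H) zero_lt_one]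
    have himg : IsCompact ((Subtype.val : ↥V → H) '' ((Subtype.val : ↥V → H) ⁻¹' C)) :=
      hD.image continuous_subtype_val
    rw [← hCeq] at himg
    exact himg
  exact this

lemma mem_closure_finiteRank {T : H →L[ℂ] H} (hT : IsCompactOperator T) :
    T ∈ closure {a : H →L[ℂ] H | IsFiniteRankOp a} := by
  rw [Metric.mem_closure_iff]
  intro ε hε
  have hK : IsCompact (closure (T '' Metric.closedBall 0 1)) :=
    IsCompactOperator.isCompact_closure_image_closedBall
      (f := (T : H →ₗ[ℂ] H)) hT 1
  obtain ⟨t, -, htfin, hcover⟩ := finite_cover_balls_of_compact hK (half_pos hε)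
  set V : Submodule ℂ H := span ℂ t with hVdef
  haveI : FiniteDimensional ℂ ↥V := FiniteDimensional.span_of_finite ℂ htfin
  set F : H →L[ℂ] H := V.subtypeL ∘L (orthogonalProjection V ∘L T) with hF
  have hFfr : IsFiniteRankOp F := by
    refine Submodule.finiteDimensional_of_le (S₂ := V) ?_
    rintro y ⟨x, rfl⟩
    exact ((orthogonalProjection V) (T x)).2
  have hmin : ∀ (y : H) (c : ↥V), ‖y - ↑(orthogonalProjection V y)‖ ≤ ‖y - ↑c‖ := by
    intro y c
    rw [← Submodule.starProjection_apply, Submodule.starProjection_minimal]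
    exact ciInf_le ⟨0, Set.forall_mem_range.2 fun _ => norm_nonneg _⟩ c
  have hbound : ∀ x : H, ‖(T - F) x‖ ≤ (ε / 2) * ‖x‖ := by
    intro x
    rcases eq_or_ne x 0 with rfl | hx0
    · simp
    · have hxpos : (0:ℝ) < ‖x‖ := norm_pos_iff.mpr hx0
      set y : H := (‖x‖ : ℝ)⁻¹ • x with hy
      have hymem : y ∈ Metric.closedBall (0:H) 1 := by
        rw [Metric.mem_closedBall, dist_zero_right, hy, norm_smul, norm_inv, Real.norm_eq_abs,
          abs_of_pos hxpos]
        rw [inv_mul_cancel₀ hxpos.ne']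
      have hTy : T y ∈ closure (T '' Metric.closedBall 0 1) :=
        subset_closure ⟨y, hymem, rfl⟩
      obtain ⟨c, hct, hcball⟩ := Set.mem_iUnion₂.mp (hcover hTy)
      have hcV : c ∈ V := subset_span hct
      have h1 : ‖T y - ↑(orthogonalProjection V (T y))‖ ≤ ‖T y - c‖ := hmin (T y) ⟨c, hcV⟩
      have h2 : ‖T y - c‖ < ε / 2 := by
        rw [Metric.mem_ball, dist_eq_norm] at hcball
        exact hcball
      have hTFy : (T - F) y = T y - ↑(orthogonalProjection V (T y)) := by
        simp [hF, ContinuousLinearMap.sub_apply]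
      have h3 : ‖(T - F) y‖ ≤ ε / 2 := by
        rw [hTFy]
        exact h1.trans h2.le
      have hsc : (T - F) x = (‖x‖ : ℝ) • (T - F) y := by
        rw [hy, (T - F).map_smul_of_tower, smul_smul, mul_inv_cancel₀ hxpos.ne', one_smul]
      rw [hsc, norm_smul, Real.norm_eq_abs, abs_of_pos hxpos, mul_comm]
      exact mul_le_mul_of_nonneg_right h3 hxpos.le
  refine ⟨F, hFfr, ?_⟩
  rw [dist_eq_norm]
  calc ‖T - F‖ ≤ ε / 2 := ContinuousLinearMap.opNorm_le_bound _ (half_pos hε).le hbound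
  _ < ε := half_lt_self hε


theorem finite_rank_in_image_and_dense_range_on_compacts
    (k : ℕ) (hk : 0 < k) (hkdim : (k : Cardinal) < Module.rank ℂ H)
    (φ : (H →L[ℂ] H) →ₗ[ℂ] (H →L[ℂ] H))
    (hpos : ∀ a : H →L[ℂ] H, a.IsPositive → (φ a).IsPositive)
    (hunital : φ 1 = 1)
    (honto : φ '' {P | IsRankProj k P} = {P | IsRankProj k P}) :
    (∀ b : H →L[ℂ] H, IsFiniteRankOp b →
      ∃ a : H →L[ℂ] H, IsFiniteRankOp a ∧ φ a = b) ∧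
    {a : H →L[ℂ] H | IsCompactOperator a} ⊆
      closure (φ '' {a : H →L[ℂ] H | IsCompactOperator a}) := by
  have main : ∀ b : H →L[ℂ] H, IsFiniteRankOp b →
      ∃ a : H →L[ℂ] H, IsFiniteRankOp a ∧ φ a = b := by
    intro b hb
    have hmem : b ∈ span ℂ {P : H →L[ℂ] H | IsRankProj k P} := finiteRank_mem_span hk hkdim hb
    have hle : span ℂ {P : H →L[ℂ] H | IsRankProj k P} ≤ Submodule.map φ frSub := by
      rw [Submodule.span_le]
      intro P hP
      rw [← honto] at hP
      obtain ⟨Q, hQ, rfl⟩ := hP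
      exact ⟨Q, isFiniteRankOp_of_rankProj hQ, rfl⟩
    obtain ⟨a, ha, rfl⟩ := hle hmem
    exact ⟨a, ha, rfl⟩
  refine ⟨main, ?_⟩
  intro T hT
  have h1 : {a : H →L[ℂ] H | IsFiniteRankOp a} ⊆ φ '' {a : H →L[ℂ] H | IsCompactOperator a} := by
    intro b hb
    obtain ⟨a, ha, rfl⟩ := main b hb
    exact ⟨a, isCompactOperator_of_finiteRank ha, rfl⟩
  exact (closure_mono h1) (mem_closure_finiteRank hT)
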